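/- Let n ≥ 2, p, q ∈ (1,∞) with 1/p + 1/q = 1, and let z = (z₀, z̄) ∈ ∂K_q^{n+1} \ {0}, i.e., z₀ = ‖z̄‖_q > 0. Then {z}^⊥ ∩ K_p^{n+1} = {t·f : t ≥ 0}, where f = (1, -sgn(z̄) ∘ |z₀⁻¹ z̄|^(q-1)) (sign, absolute value and power taken componentwise, ∘ denoting componentwise product). -/

import Mathlib

open scoped RealInnerProductSpace

lemma aux_sign_mul_self (r : ℝ) : Real.sign r * r = |r| := by
  rcases lt_trichotomy r 0 with h | rfl | h
  · rw [Real.sign_of_neg h, abs_of_neg h]; ring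
  · simp
  · rw [Real.sign_of_pos h, abs_of_pos h]; ring

lemma aux_abs_div_self {r : ℝ} (h : r ≠ 0) : |r| / r = Real.sign r := by
  rcases h.lt_or_gt with h' | h'
  · rw [Real.sign_of_neg h', abs_of_neg h']; field_simp
  · rw [Real.sign_of_pos h', abs_of_pos h']; field_simp

lemma young_strict {p q a b : ℝ} (hpq : p.HolderConjugate q) (ha : 0 ≤ a) (hb : 0 ≤ b)
    (hne : a ^ p ≠ b ^ q) : a * b < a ^ p / p + b ^ q / q := by
  rcases eq_or_lt_of_le ha with rfl | hapos
  · rw [Real.zero_rpow hpq.ne_zero] at hne ⊢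
    have hbq : 0 < b ^ q := lt_of_le_of_ne (Real.rpow_nonneg hb q) (Ne.symm hne).symm
    have : 0 < b ^ q / q := div_pos hbq hpq.symm.pos
    simpa using this
  rcases eq_or_lt_of_le hb with rfl | hbpos
  · rw [Real.zero_rpow hpq.symm.ne_zero] at hne ⊢
    have haq : 0 < a ^ p := Real.rpow_pos_of_pos hapos p
    have : 0 < a ^ p / p := div_pos haq hpq.pos
    simpa using this
  · have hX : 0 < a ^ p := Real.rpow_pos_of_pos hapos p
    have hY : 0 < b ^ q := Real.rpow_pos_of_pos hbpos q
    have hconc := strictConcaveOn_log_Ioi.2 (Set.mem_Ioi.2 hX) (Set.mem_Ioi.2 hY) hne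
      hpq.inv_pos hpq.symm.inv_pos hpq.inv_add_inv_eq_one
    have hlogX : p⁻¹ * Real.log (a ^ p) = Real.log a := by
      rw [Real.log_rpow hapos, inv_mul_cancel_left₀ hpq.ne_zero]
    have hlogY : q⁻¹ * Real.log (b ^ q) = Real.log b := by
      rw [Real.log_rpow hbpos, inv_mul_cancel_left₀ hpq.symm.ne_zero]
    have hmix : 0 < p⁻¹ * (a ^ p) + q⁻¹ * (b ^ q) :=
      add_pos (mul_pos hpq.inv_pos hX) (mul_pos hpq.symm.inv_pos hY)
    calc a * b = Real.exp (p⁻¹ * Real.log (a ^ p) + q⁻¹ * Real.log (b ^ q)) := by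
          rw [hlogX, hlogY, Real.exp_add, Real.exp_log hapos, Real.exp_log hbpos]
      _ < Real.exp (Real.log (p⁻¹ * (a ^ p) + q⁻¹ * (b ^ q))) := by
          apply Real.exp_lt_exp.2
          simpa [smul_eq_mul] using hconc
      _ = p⁻¹ * (a ^ p) + q⁻¹ * (b ^ q) := Real.exp_log hmix
      _ = a ^ p / p + b ^ q / q := by ring

lemma young_eq {p q a b : ℝ} (hpq : p.HolderConjugate q) (ha : 0 ≤ a) (hb : 0 ≤ b)
    (h : a * b = a ^ p / p + b ^ q / q) : a ^ p = b ^ q := by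
  by_contra hne
  exact absurd h (young_strict hpq ha hb hne).ne



/-- The nontrivial exposed faces of the `p`-cone: if `z` lies on the boundary of
the dual `q`-cone and `z ≠ 0`, then `{z}^⊥ ∩ K_p^{n+1}` is the ray generated by
`f = (1, -sgn(z̄) ∘ |z₀⁻¹ z̄|^(q-1))`. -/
theorem stmt_8 (n : ℕ) (hn : 2 ≤ n) (p q : ℝ) (hp : 1 < p) (hq : 1 < q)
    (hpq : 1 / p + 1 / q = 1)
    (z : EuclideanSpace ℝ (Fin (n + 1)))
    (hz0 : z 0 = (∑ i : Fin n, |z i.succ| ^ q) ^ (1 / q)) (hz0pos : 0 < z 0)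
    (f : EuclideanSpace ℝ (Fin (n + 1))) (hf0 : f 0 = 1)
    (hfi : ∀ i : Fin n, f i.succ = -Real.sign (z i.succ) * |(z 0)⁻¹ * z i.succ| ^ (q - 1)) :
    {x : EuclideanSpace ℝ (Fin (n + 1)) |
        (∑ i : Fin n, |x i.succ| ^ p) ^ (1 / p) ≤ x 0 ∧ ⟪x, z⟫ = 0} =
      {x | ∃ t : ℝ, 0 ≤ t ∧ x = t • f} := by
  have hp0 : (0:ℝ) < p := lt_trans one_pos hp
  have hq0 : (0:ℝ) < q := lt_trans one_pos hq
  have hcon : p.HolderConjugate q := Real.holderConjugate_iff.2 ⟨hp, by rw [← one_div, ← one_div]; exact hpq⟩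
  have hq1 : 0 < q - 1 := sub_pos.2 hq
  have hqp : (q - 1) * p = q := by
    have hpne : p ≠ 0 := hp0.ne'
    have hqne : q ≠ 0 := hq0.ne'
    field_simp at hpq
    nlinarith [hpq]
  have hinner : ∀ x : EuclideanSpace ℝ (Fin (n + 1)),
      ⟪x, z⟫ = x 0 * z 0 + ∑ i : Fin n, x i.succ * z i.succ := by
    intro x
    simp [PiLp.inner_apply, RCLike.inner_apply, Fin.sum_univ_succ, mul_comm]
  set T := ∑ i : Fin n, |z i.succ| ^ q with hT
  have hTnn : 0 ≤ T := Finset.sum_nonneg fun i _ => Real.rpow_nonneg (abs_nonneg _) _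
  have hzq : z 0 ^ q = T := by
    rw [hz0, ← Real.rpow_mul hTnn, one_div, inv_mul_cancel₀ hq0.ne', Real.rpow_one]
  have hTpos : 0 < T := hzq ▸ Real.rpow_pos_of_pos hz0pos q
  have habsz : ∀ i : Fin n, |(z 0)⁻¹ * z i.succ| = |z i.succ| / z 0 := by
    intro i
    rw [abs_mul, abs_of_pos (inv_pos.2 hz0pos), inv_mul_eq_div]
  have hfabs : ∀ i : Fin n, |f i.succ| = (|z i.succ| / z 0) ^ (q - 1) := by
    intro i
    rw [hfi i, abs_mul, abs_neg, habsz i,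
      abs_of_nonneg (Real.rpow_nonneg (div_nonneg (abs_nonneg _) hz0pos.le) _)]
    rcases eq_or_ne (z i.succ) 0 with h | h
    · simp [h, Real.zero_rpow hq1.ne', zero_div]
    · rcases Real.sign_apply_eq_of_ne_zero _ h with hs | hs <;> rw [hs] <;> norm_num
  have habsq : ∀ i : Fin n, |z i.succ| * |z i.succ| ^ (q - 1) = |z i.succ| ^ q := by
    intro i
    rw [← Real.rpow_one_add' (abs_nonneg _) (by linarith : 1 + (q - 1) ≠ 0)]
    norm_num
  have hfz : ∀ i : Fin n, f i.succ * z i.succ = -(|z i.succ| ^ q / z 0 ^ (q - 1)) := by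
    intro i
    have hd : (|z i.succ| / z 0) ^ (q - 1) = |z i.succ| ^ (q - 1) / z 0 ^ (q - 1) :=
      Real.div_rpow (abs_nonneg _) hz0pos.le _
    calc f i.succ * z i.succ
        = -(Real.sign (z i.succ) * z i.succ * |z i.succ| ^ (q - 1)) / z 0 ^ (q - 1) := by
          rw [hfi i, habsz i, hd]; ring
      _ = -(|z i.succ| ^ q / z 0 ^ (q - 1)) := by
          rw [aux_sign_mul_self, habsq i]; ring
  have hz0q1 : z 0 ^ q / z 0 ^ (q - 1) = z 0 := by
    rw [← Real.rpow_sub hz0pos]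
    norm_num
  have hsum_fz : ∑ i : Fin n, f i.succ * z i.succ = -z 0 := by
    calc ∑ i : Fin n, f i.succ * z i.succ
        = -∑ i : Fin n, |z i.succ| ^ q / z 0 ^ (q - 1) := by
          rw [← Finset.sum_neg_distrib]
          exact Finset.sum_congr rfl fun i _ => hfz i
      _ = -(T / z 0 ^ (q - 1)) := by rw [← Finset.sum_div]
      _ = -z 0 := by rw [← hzq, hz0q1]
  have hfp : ∑ i : Fin n, |f i.succ| ^ p = 1 := by
    have h1 : ∀ i : Fin n, |f i.succ| ^ p = |z i.succ| ^ q / z 0 ^ q := by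
      intro i
      rw [hfabs i, ← Real.rpow_mul (div_nonneg (abs_nonneg _) hz0pos.le), hqp,
        Real.div_rpow (abs_nonneg _) hz0pos.le]
    rw [Finset.sum_congr rfl fun i _ => h1 i, ← Finset.sum_div, ← hT, hzq, div_self hTpos.ne']
  ext x
  simp only [Set.mem_setOf_eq]
  constructor
  · rintro ⟨hx1, hx2⟩
    rw [hinner] at hx2
    set S := ∑ i : Fin n, |x i.succ| ^ p with hS
    have hSnn : 0 ≤ S := Finset.sum_nonneg fun i _ => Real.rpow_nonneg (abs_nonneg _) _
    have hx0nn : 0 ≤ x 0 := le_trans (Real.rpow_nonneg hSnn _) hx1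
    have hallzero : S = 0 → ∀ i : Fin n, x i.succ = 0 := by
      intro hS0 i
      have h2 := (Finset.sum_eq_zero_iff_of_nonneg
        (fun i (_ : i ∈ Finset.univ) => Real.rpow_nonneg (abs_nonneg (x i.succ)) p)).1 hS0 i
        (Finset.mem_univ i)
      have := (Real.rpow_eq_zero_iff_of_nonneg (abs_nonneg _)).1 h2
      exact abs_eq_zero.1 this.1
    rcases eq_or_lt_of_le hx0nn with h0 | hx0pos
    · refine ⟨0, le_refl 0, ?_⟩
      have hS0 : S = 0 := by
        have h1 : S ^ (1/p) ≤ 0 := h0 ▸ hx1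
        have h2 : 0 ≤ S ^ (1/p) := Real.rpow_nonneg hSnn _
        have h3 : S ^ (1/p) = 0 := le_antisymm h1 h2
        by_contra hne
        exact absurd h3 (Real.rpow_pos_of_pos (lt_of_le_of_ne hSnn (Ne.symm hne)) _).ne'
      refine PiLp.ext fun j => ?_
      have hj0 : ((0:ℝ) • f) j = 0 := by simp
      rw [hj0]
      induction j using Fin.cases with
      | zero => exact h0.symm
      | succ i => exact hallzero hS0 i
    · have key0 : x 0 * z 0 = -∑ i : Fin n, x i.succ * z i.succ := by linarith
      have key : x 0 * z 0 ≤ ∑ i : Fin n, |x i.succ| * |z i.succ| := by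
        rw [key0, ← Finset.sum_neg_distrib]
        exact Finset.sum_le_sum fun i _ => (neg_le_abs _).trans (le_of_eq (abs_mul _ _))
      have hSpos : 0 < S := by
        rcases eq_or_lt_of_le hSnn with hS0 | h
        · exfalso
          have hzzero : ∑ i : Fin n, |x i.succ| * |z i.succ| = 0 :=
            Finset.sum_eq_zero fun i _ => by rw [hallzero hS0.symm i]; simp
          rw [hzzero] at key
          exact absurd key (not_le.2 (mul_pos hx0pos hz0pos))
        · exact h
      set c := S ^ (1/p) with hc
      have hcpos : 0 < c := Real.rpow_pos_of_pos hSpos _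
      have hcp : c ^ p = S := by
        rw [hc, ← Real.rpow_mul hSnn, one_div, inv_mul_cancel₀ hp0.ne', Real.rpow_one]
      set a : Fin n → ℝ := fun i => |x i.succ| / c with ha
      set b : Fin n → ℝ := fun i => |z i.succ| / z 0 with hb
      have hann : ∀ i, 0 ≤ a i := fun i => div_nonneg (abs_nonneg _) hcpos.le
      have hbnn : ∀ i, 0 ≤ b i := fun i => div_nonneg (abs_nonneg _) hz0pos.le
      have hsa : ∑ i : Fin n, a i ^ p = 1 := by
        have : ∀ i : Fin n, a i ^ p = |x i.succ| ^ p / S := by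
          intro i
          rw [ha, Real.div_rpow (abs_nonneg _) hcpos.le, hcp]
        rw [Finset.sum_congr rfl fun i _ => this i, ← Finset.sum_div, ← hS,
          div_self hSpos.ne']
      have hsb : ∑ i : Fin n, b i ^ q = 1 := by
        have : ∀ i : Fin n, b i ^ q = |z i.succ| ^ q / T := by
          intro i
          rw [hb, Real.div_rpow (abs_nonneg _) hz0pos.le, hzq]
        rw [Finset.sum_congr rfl fun i _ => this i, ← Finset.sum_div, ← hT,
          div_self hTpos.ne']
      have hab_le : ∀ i, a i * b i ≤ a i ^ p / p + b i ^ q / q := fun i =>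
        Real.young_inequality_of_nonneg (hann i) (hbnn i) hcon
      have hRsum : ∑ i : Fin n, (a i ^ p / p + b i ^ q / q) = 1 := by
        rw [Finset.sum_add_distrib, ← Finset.sum_div, ← Finset.sum_div, hsa, hsb]
        exact hpq
      have hsum_le : ∑ i : Fin n, a i * b i ≤ 1 := by
        rw [← hRsum]
        exact Finset.sum_le_sum fun i _ => hab_le i
      have habsum : ∑ i : Fin n, a i * b i
          = (∑ i : Fin n, |x i.succ| * |z i.succ|) / (c * z 0) := by
        rw [Finset.sum_div]
        refine Finset.sum_congr rfl fun i _ => ?_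
        rw [ha, hb]
        field_simp
      have hsum_ge : x 0 / c ≤ ∑ i : Fin n, a i * b i := by
        rw [habsum, show x 0 / c = x 0 * z 0 / (c * z 0) from
          (mul_div_mul_right _ _ hz0pos.ne').symm]
        gcongr
      have h1le : x 0 ≤ c := (div_le_one hcpos).1 (le_trans hsum_ge hsum_le)
      have hcx : c = x 0 := le_antisymm hx1 h1le
      have hsum_eq : ∑ i : Fin n, a i * b i = 1 := by
        refine le_antisymm hsum_le ?_
        calc (1:ℝ) = x 0 / c := by rw [hcx, div_self hx0pos.ne']
          _ ≤ _ := hsum_ge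
      have hterm := (Finset.sum_eq_sum_iff_of_le fun i _ => hab_le i).1
        (by rw [hsum_eq, hRsum])
      have hxeq : ∀ i : Fin n, a i ^ p = b i ^ q := fun i =>
        young_eq hcon (hann i) (hbnn i) (hterm i (Finset.mem_univ i))
      have habsprod : ∑ i : Fin n, |x i.succ| * |z i.succ| = x 0 * z 0 := by
        have h2 : (∑ i : Fin n, |x i.succ| * |z i.succ|) / (c * z 0) = 1 := by
          rw [← habsum, hsum_eq]
        have h3 := (div_eq_one_iff_eq (mul_ne_zero hcpos.ne' hz0pos.ne')).1 h2
        rw [h3, hcx]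
      have hsign : ∀ i ∈ (Finset.univ : Finset (Fin n)),
          -(x i.succ * z i.succ) = |x i.succ| * |z i.succ| := by
        refine (Finset.sum_eq_sum_iff_of_le (fun i _ =>
          (neg_le_abs (x i.succ * z i.succ)).trans (le_of_eq (abs_mul _ _)))).1 ?_
        rw [Finset.sum_neg_distrib]
        linarith [key0, habsprod]
      refine ⟨x 0, hx0nn, PiLp.ext fun j => ?_⟩
      have hsmul : ∀ j, ((x 0) • f) j = x 0 * f j := fun j => rfl
      rw [hsmul]
      induction j using Fin.cases with
      | zero => rw [hf0, mul_one]
      | succ i =>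
        have habsx : |x i.succ| = x 0 * b i ^ (q - 1) := by
          have h2 : (a i ^ p) ^ (1/p) = a i := by
            rw [← Real.rpow_mul (hann i), mul_one_div, div_self hp0.ne', Real.rpow_one]
          have h3 : (b i ^ q) ^ (1/p) = b i ^ (q - 1) := by
            rw [← Real.rpow_mul (hbnn i), mul_one_div]
            congr 1
            field_simp
            linarith [hqp]
          have h1 : a i = b i ^ (q - 1) := by rw [← h2, hxeq i, h3]
          have h4 : |x i.succ| = c * a i := by rw [ha]; field_simp
          rw [h4, h1, hcx]
        rcases eq_or_ne (z i.succ) 0 with hzz | hzz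
        · have hb0 : b i = 0 := by simp [hb, hzz]
          have hx0' : x i.succ = 0 := by
            have h5 := habsx
            rw [hb0, Real.zero_rpow hq1.ne', mul_zero] at h5
            exact abs_eq_zero.1 h5
          rw [hx0', hfi i, hzz, Real.sign_zero]
          simp
        · have hsgn' : -(x i.succ * z i.succ) = |x i.succ| * |z i.succ| :=
            hsign i (Finset.mem_univ i)
          have hxval : x i.succ = -|x i.succ| * Real.sign (z i.succ) := by
            have h4 : x i.succ * z i.succ = -(|x i.succ| * |z i.succ|) := by linarith
            have h6 : (-|x i.succ| * Real.sign (z i.succ)) * z i.succ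
                = -(|x i.succ| * |z i.succ|) := by
              rw [mul_assoc, mul_comm (Real.sign (z i.succ)), mul_comm (z i.succ),
                aux_sign_mul_self]
              ring
            exact mul_right_cancel₀ hzz (h4.trans h6.symm)
          rw [hxval, habsx, hfi i, habsz i, hb]
          ring
  · rintro ⟨t, ht, rfl⟩
    have hsmul : ∀ j, (t • f) j = t * f j := fun j => rfl
    constructor
    · have h1 : ∀ i : Fin n, |(t • f) i.succ| ^ p = t ^ p * |f i.succ| ^ p := by
        intro i
        rw [hsmul, abs_mul, abs_of_nonneg ht, Real.mul_rpow ht (abs_nonneg _)]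
      rw [Finset.sum_congr rfl fun i _ => h1 i, ← Finset.mul_sum, hfp, mul_one,
        ← Real.rpow_mul ht, mul_one_div, div_self hp0.ne', Real.rpow_one, hsmul, hf0, mul_one]
    · rw [hinner]
      have h2 : ∑ i : Fin n, (t • f) i.succ * z i.succ
          = t * ∑ i : Fin n, f i.succ * z i.succ := by
        rw [Finset.mul_sum]
        exact Finset.sum_congr rfl fun i _ => by rw [hsmul]; ring
      rw [h2, hsum_fz, hsmul, hf0]
      ring
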